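/- (Closed-form integral computation) For n ≥ 2, ∫_{n−1}^{∞} [1 − (z−n+1)(z+1)^{n−1} / zⁿ] dz = (1/(n−1)^{n−1}) · (nⁿ − (n−1)ⁿ − n(n−1)^{n−1}). -/

import Mathlib

open MeasureTheory Filter Set Topology

/-- Key inequality: for `z ≥ k`, `(z - k)(z+1)^k ≤ z^(k+1)`. -/
lemma key_ineq (k : ℕ) : ∀ z : ℝ, (k : ℝ) ≤ z → (z - k) * (z + 1) ^ k ≤ z ^ (k + 1) := by
  induction k with
  | zero => intro z hz; simp
  | succ k ih =>
    intro z hz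
    have hz0 : (0:ℝ) ≤ z := le_trans (by positivity) hz
    have hzk : (k : ℝ) ≤ z := by push_cast at hz ⊢; linarith
    have h1 := ih z hzk
    have h2 : (0:ℝ) ≤ (z + 1) ^ k := by positivity
    have h3 : (z - ((k:ℝ) + 1)) * (z + 1) ≤ z * (z - k) := by nlinarith
    calc (z - ((k:ℕ)+1 : ℕ)) * (z + 1) ^ (k + 1)
        = ((z - ((k:ℝ)+1)) * (z + 1)) * (z + 1) ^ k := by push_cast; ring
      _ ≤ (z * (z - k)) * (z + 1) ^ k := by
          apply mul_le_mul_of_nonneg_right h3 h2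
      _ = z * ((z - k) * (z + 1) ^ k) := by ring
      _ ≤ z * z ^ (k + 1) := by exact mul_le_mul_of_nonneg_left h1 hz0
      _ = z ^ (k + 1 + 1) := by ring

theorem stmt_13 (n : ℕ) (hn : 2 ≤ n) :
    ∫ z in Set.Ici ((n : ℝ) - 1),
        (1 - (z - (n : ℝ) + 1) * (z + 1) ^ (n - 1) / z ^ n)
      = (1 / ((n : ℝ) - 1) ^ (n - 1))
          * ((n : ℝ) ^ n - ((n : ℝ) - 1) ^ n - (n : ℝ) * ((n : ℝ) - 1) ^ (n - 1)) := by
  obtain ⟨m, rfl⟩ : ∃ m, n = m + 2 := ⟨n - 2, by omega⟩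
  clear hn
  simp only [show m + 2 - 1 = m + 1 from rfl, Nat.cast_add, Nat.cast_ofNat]
  set a : ℝ := (m : ℝ) + 2 - 1 with ha
  have ha1 : a = (m : ℝ) + 1 := by ring
  set g : ℝ → ℝ := fun z => z - (z + 1) ^ (m + 2) / z ^ (m + 1) with hg
  set g' : ℝ → ℝ := fun z => 1 - (z - ((m:ℝ) + 2) + 1) * (z + 1) ^ (m + 1) / z ^ (m + 2)
    with hg'
  have hderiv : ∀ z : ℝ, z ≠ 0 → HasDerivAt g (g' z) z := by
    intro z hz
    have h1 : HasDerivAt (fun z : ℝ => (z + 1) ^ (m + 2))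
        (((m:ℝ) + 2) * (z + 1) ^ (m + 1) * 1) z := by
      have := ((hasDerivAt_id z).add_const 1).fun_pow (m + 2)
      simpa [Nat.add_sub_cancel] using this
    have h2 : HasDerivAt (fun z : ℝ => z ^ (m + 1)) (((m:ℝ) + 1) * z ^ m) z := by
      simpa using hasDerivAt_pow (m + 1) z
    have hzp : z ^ (m + 1) ≠ 0 := pow_ne_zero _ hz
    have h3 := (h1.div h2 hzp)
    have h4 := (hasDerivAt_id z).sub h3
    convert h4 using 1
    · rfl
    · rfl
    · rfl
    rw [hg']
    field_simp
    ring
  have hcont : ContinuousOn g (Ici a) := by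
    intro z hz
    have hz0 : z ≠ 0 := by
      have : (1:ℝ) ≤ z := le_trans (by rw [ha1]; have := Nat.cast_nonneg (α := ℝ) m; linarith) hz
      linarith
    exact ((hderiv z hz0).continuousAt).continuousWithinAt
  have hpos : ∀ z ∈ Ioi a, 0 ≤ g' z := by
    intro z hz
    rw [mem_Ioi, ha1] at hz
    have hz0 : (0:ℝ) < z := lt_trans (by positivity) hz
    have hkey := key_ineq (m + 1) z (by push_cast; linarith)
    rw [hg']
    have h5 : (z - ((m:ℝ) + 2) + 1) * (z + 1) ^ (m + 1) ≤ z ^ (m + 2) := by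
      have : z - ((m:ℝ)+2) + 1 = z - ((m+1 : ℕ) : ℝ) := by push_cast; ring
      rw [this]
      simpa using hkey
    have h6 : (0:ℝ) < z ^ (m + 2) := by positivity
    have := (div_le_one h6).mpr h5
    linarith
  have htend : Tendsto g atTop (𝓝 (-((m:ℝ) + 2))) := by
    have hf : HasDerivAt (fun u : ℝ => (1 + u) ^ (m + 2)) ((m:ℝ) + 2) 0 := by
      have := ((hasDerivAt_id (0:ℝ)).const_add 1).fun_pow (m + 2)
      simpa [Nat.add_sub_cancel] using this
    have hslope := hasDerivAt_iff_tendsto_slope.mp hf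
    have hinv : Tendsto (fun z : ℝ => 1 / z) atTop (𝓝[≠] 0) := by
      apply tendsto_nhdsWithin_of_tendsto_nhds_of_eventually_within
      · simpa using tendsto_inv_atTop_zero
      · filter_upwards [eventually_gt_atTop (0:ℝ)] with z hz
        exact one_div_ne_zero (ne_of_gt hz)
    have hcomp := hslope.comp hinv
    have heq : ∀ᶠ z in atTop, -(slope (fun u : ℝ => (1 + u) ^ (m + 2)) 0 (1 / z)) = g z := by
      filter_upwards [eventually_gt_atTop (0:ℝ)] with z hz
      have hz0 : z ≠ 0 := ne_of_gt hz
      rw [slope_def_field, hg]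
      field_simp
      rw [div_pow]
      field_simp
      ring
    have := (hcomp.neg).congr' heq
    simpa using this
  have hInt := integral_Ioi_of_hasDerivAt_of_nonneg (hcont a Set.self_mem_Ici)
    (fun z hz => hderiv z (by
      rw [mem_Ioi, ha1] at hz
      have : (0:ℝ) < z := lt_trans (by positivity) hz
      exact ne_of_gt this)) hpos htend
  rw [MeasureTheory.integral_Ici_eq_integral_Ioi]
  have hgoal : ∫ z in Ioi a, g' z
      = (1 / ((m:ℝ) + 2 - 1) ^ (m + 1))
          * (((m:ℝ)+2) ^ (m+2) - ((m:ℝ) + 2 - 1) ^ (m+2) - ((m:ℝ)+2) * ((m:ℝ) + 2 - 1) ^ (m + 1)) := by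
    rw [hInt, hg, ha1]
    simp only
    have hA : ((m:ℝ) + 1) ^ (m + 1) ≠ 0 := by positivity
    have hpow : ((m:ℝ) + 2 - 1) = (m:ℝ) + 1 := by ring
    rw [hpow]
    have hp2 : ((m:ℝ) + 1) ^ (m + 2) = ((m:ℝ) + 1) ^ (m + 1) * ((m:ℝ) + 1) := pow_succ _ _
    rw [hp2]
    field_simp
    ring
  rw [← hgoal]
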